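/- Every element of order 3 in PGL(2,ℤ) is conjugate in PGL(2,ℤ) to [U]. -/

import Mathlib

open Matrix

abbrev GL2Z := GL (Fin 2) ℤ

/-- PGL(2,ℤ): the quotient of GL(2,ℤ) by its center {I, -I}. -/
abbrev PGL2Z := GL2Z ⧸ Subgroup.center GL2Z

/-- The image of a matrix in PGL(2,ℤ). -/
def cls (M : GL2Z) : PGL2Z := QuotientGroup.mk M

def Smat : GL2Z := ⟨!![0,1;1,0], !![0,1;1,0], by decide, by decide⟩
def Nmat : GL2Z := ⟨!![-1,0;0,1], !![-1,0;0,1], by decide, by decide⟩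
def Tmat : GL2Z := ⟨!![0,-1;1,0], !![0,1;-1,0], by decide, by decide⟩
def Umat : GL2Z := ⟨!![0,-1;1,1], !![1,1;-1,0], by decide, by decide⟩

section Aux

lemma mat22_ext' {a b c d e f g h : ℤ} (h1 : a = e) (h2 : b = f) (h3 : c = g) (h4 : d = h) :
    !![a,b;c,d] = !![e,f;g,h] := by subst h1 h2 h3 h4; rfl

lemma sq_le_of_natAbs_le' {x y : ℤ} (h : x.natAbs ≤ y.natAbs) : x*x ≤ y*y := by
  have h1 := @Int.natAbs_mul_self x
  have h2 := @Int.natAbs_mul_self y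
  have h3 : (x.natAbs * x.natAbs : ℕ) ≤ y.natAbs * y.natAbs := Nat.mul_le_mul h h
  have h4 : ((x.natAbs * x.natAbs : ℕ) : ℤ) ≤ ((y.natAbs * y.natAbs : ℕ) : ℤ) := by exact_mod_cast h3
  rw [h1, h2] at h4; exact h4

lemma natAbs_lt_of_sq_lt' {x y : ℤ} (h : x*x < y*y) : x.natAbs < y.natAbs := by
  by_contra hc
  push_neg at hc
  exact absurd (sq_le_of_natAbs_le' hc) (by linarith)

lemma reduction' : ∀ k : ℕ, ∀ a b c : ℤ, c.natAbs ≤ k → a*(1-a) - b*c = 1 →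
    ∃ P : Matrix (Fin 2) (Fin 2) ℤ, (P.det = 1 ∨ P.det = -1) ∧
      !![a,b;c,1-a] * P = P * !![(0:ℤ),-1;1,1] := by
  intro k
  induction k with
  | zero =>
    intro a b c hc hyp
    have hc0 : c = 0 := by omega
    subst hc0
    exfalso; nlinarith [sq_nonneg (2*a-1)]
  | succ k ih =>
    suffices h : ∀ j : ℕ, ∀ a b c : ℤ, (1-2*a).natAbs ≤ j → c.natAbs ≤ k+1 → a*(1-a) - b*c = 1 →
        ∃ P : Matrix (Fin 2) (Fin 2) ℤ, (P.det = 1 ∨ P.det = -1) ∧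
          !![a,b;c,1-a] * P = P * !![(0:ℤ),-1;1,1] by
      intro a b c hc hyp
      exact h (1-2*a).natAbs a b c le_rfl hc hyp
    intro j
    induction j with
    | zero => intro a b c he hc hyp; omega
    | succ j ihj =>
      intro a b c he hc hyp
      rcases eq_or_ne c 0 with rfl | hc0
      · exfalso; nlinarith [sq_nonneg (2*a-1)]
      rcases eq_or_ne c 1 with rfl | hc1
      · refine ⟨!![1,a;0,1], Or.inl (by simp [Matrix.det_fin_two_of]), ?_⟩
        rw [Matrix.mul_fin_two, Matrix.mul_fin_two]
        exact mat22_ext' (by ring) (by linarith) (by ring) (by ring)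
      rcases eq_or_ne c (-1) with rfl | hcm1
      · refine ⟨!![-1,-a;0,1], Or.inr (by simp [Matrix.det_fin_two_of]), ?_⟩
        rw [Matrix.mul_fin_two, Matrix.mul_fin_two]
        exact mat22_ext' (by ring) (by linarith) (by ring) (by ring)
      have hc2 : 2 ≤ c.natAbs := by omega
      by_cases hec : c.natAbs < (1-2*a).natAbs
      · -- T-step: reduce e
        obtain ⟨n, hn⟩ : ∃ n : ℤ, (1 - 2*(a - n*c)).natAbs < (1-2*a).natAbs := by
          rcases le_or_gt (1-2*a) 0 with h1 | h1 <;> rcases le_or_gt c 0 with h2 | h2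
          · exact ⟨-1, by omega⟩
          · exact ⟨1, by omega⟩
          · exact ⟨1, by omega⟩
          · exact ⟨-1, by omega⟩
        have hyp' : (a - n*c)*(1-(a - n*c)) - (b - n*(1-2*a) - n^2*c)*c = 1 := by
          linear_combination hyp
        obtain ⟨P', hdet', heq'⟩ := ihj (a - n*c) (b - n*(1-2*a) - n^2*c) c (by omega) hc hyp'
        refine ⟨!![1,n;0,1] * P', ?_, ?_⟩
        · rw [Matrix.det_mul]; simpa [Matrix.det_fin_two_of] using hdet'
        · have hsw : !![a,b;c,1-a] * !![1,n;0,1]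
              = !![1,n;0,1] * !![a - n*c, b - n*(1-2*a) - n^2*c; c, 1-(a - n*c)] := by
            rw [Matrix.mul_fin_two, Matrix.mul_fin_two]
            exact mat22_ext' (by ring) (by ring) (by ring) (by ring)
          calc !![a,b;c,1-a] * (!![1,n;0,1] * P')
              = (!![a,b;c,1-a] * !![1,n;0,1]) * P' := by rw [Matrix.mul_assoc]
            _ = !![1,n;0,1] * (!![a - n*c, b - n*(1-2*a) - n^2*c; c, 1-(a - n*c)] * P') := by
                rw [hsw, Matrix.mul_assoc]
            _ = (!![1,n;0,1] * P') * !![(0:ℤ),-1;1,1] := by rw [heq', Matrix.mul_assoc]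
      · -- swap step
        push_neg at hec
        have hee : (1-2*a)*(1-2*a) ≤ c*c := sq_le_of_natAbs_le' hec
        have hc4 : 2*2 ≤ c*c := sq_le_of_natAbs_le' (show (2:ℤ).natAbs ≤ c.natAbs by omega)
        have h4bc : 4*(b*c) = -((1-2*a)*(1-2*a)) - 3 := by linear_combination -4*hyp
        have h16 : 16*(b*b)*(c*c) = ((1-2*a)*(1-2*a)+3)*((1-2*a)*(1-2*a)+3) := by
          linear_combination (4*b*c - (1-2*a)*(1-2*a) - 3) * h4bc
        have hbb : b*b < c*c := by nlinarith [sq_nonneg (1-2*a), sq_nonneg b, sq_nonneg c]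
        have hblt : b.natAbs < c.natAbs := natAbs_lt_of_sq_lt' hbb
        have hyp' : (1-a)*(1-(1-a)) - c*b = 1 := by linear_combination hyp
        obtain ⟨P', hdet', heq'⟩ := ih (1-a) c b (by omega) hyp'
        refine ⟨!![0,1;1,0] * P', ?_, ?_⟩
        · rw [Matrix.det_mul]
          rcases hdet' with h | h <;> simp [Matrix.det_fin_two_of, h]
        · have hsw : !![a,b;c,1-a] * !![0,1;1,0]
              = !![0,1;1,0] * !![1-a, c; b, 1-(1-a)] := by
            rw [Matrix.mul_fin_two, Matrix.mul_fin_two]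
            exact mat22_ext' (by ring) (by ring) (by ring) (by ring)
          calc !![a,b;c,1-a] * (!![0,1;1,0] * P')
              = (!![a,b;c,1-a] * !![0,1;1,0]) * P' := by rw [Matrix.mul_assoc]
            _ = !![0,1;1,0] * (!![1-a, c; b, 1-(1-a)] * P') := by rw [hsw, Matrix.mul_assoc]
            _ = (!![0,1;1,0] * P') * !![(0:ℤ),-1;1,1] := by rw [heq', Matrix.mul_assoc]

def Emat' : GL2Z := ⟨!![1,1;0,1], !![1,-1;0,1], by decide, by decide⟩
def Fmat' : GL2Z := ⟨!![1,0;1,1], !![1,0;-1,1], by decide, by decide⟩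

lemma neg_one_mem_center' : (-1 : GL2Z) ∈ Subgroup.center GL2Z := by
  rw [Subgroup.mem_center_iff]
  intro g
  ext : 1
  simp [Units.val_mul]

lemma center_val' {X : GL2Z} (hX : X ∈ Subgroup.center GL2Z) :
    (X : Matrix (Fin 2) (Fin 2) ℤ) = 1 ∨ (X : Matrix (Fin 2) (Fin 2) ℤ) = -1 := by
  have h := Subgroup.mem_center_iff.mp hX
  have hE := congrArg Units.val (h Emat')
  have hF := congrArg Units.val (h Fmat')
  simp only [Units.val_mul] at hE hF
  set A := (X : Matrix (Fin 2) (Fin 2) ℤ) with hA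
  have hEe : Emat'.val * A = A * Emat'.val := hE
  have hFe : Fmat'.val * A = A * Fmat'.val := hF
  rw [Matrix.eta_fin_two A] at hEe hFe
  rw [show Emat'.val = !![1,1;0,1] from rfl, Matrix.mul_fin_two, Matrix.mul_fin_two] at hEe
  rw [show Fmat'.val = !![1,0;1,1] from rfl, Matrix.mul_fin_two, Matrix.mul_fin_two] at hFe
  have e00 := congrFun (congrFun hEe 0) 0
  have e01 := congrFun (congrFun hEe 0) 1
  have e10 := congrFun (congrFun hEe 1) 0
  have f00 := congrFun (congrFun hFe 0) 0
  have f01 := congrFun (congrFun hFe 0) 1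
  simp [Matrix.cons_val_zero, Matrix.cons_val_one] at e00 e01 e10 f00 f01
  have hc : A 1 0 = 0 := by omega
  have hb : A 0 1 = 0 := by omega
  have had : A 0 0 = A 1 1 := by omega
  have hu : IsUnit A.det := (Matrix.isUnit_iff_isUnit_det A).mp X.isUnit
  rw [Matrix.det_fin_two, hb, hc, had] at hu
  have h1 : A 1 1 * A 1 1 - 0 * 0 = 1 ∨ A 1 1 * A 1 1 - 0 * 0 = -1 := Int.isUnit_iff.mp hu
  have h2 : A 1 1 = 1 ∨ A 1 1 = -1 := by
    rcases h1 with h | h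
    · exact Int.isUnit_iff.mp (IsUnit.of_mul_eq_one (a := A 1 1) (A 1 1) (by linarith))
    · exfalso; nlinarith [sq_nonneg (A 1 1)]
  rcases h2 with h | h
  · left
    rw [Matrix.eta_fin_two A, hb, hc, had, h]
    exact (Matrix.one_fin_two).symm
  · right
    rw [Matrix.eta_fin_two A, hb, hc, had, h]
    decide

lemma cls_neg (M : GL2Z) : cls (-M) = cls M := by
  have h1 : (-M) = (-1) * M := by
    ext : 1
    simp [Units.val_mul]
  unfold cls
  rw [h1, QuotientGroup.mk_mul, QuotientGroup.eq_one_iff (-1 : GL2Z) |>.mpr neg_one_mem_center', one_mul]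

lemma isconj_cls {M : GL2Z} {P : Matrix (Fin 2) (Fin 2) ℤ} (hdet : P.det = 1 ∨ P.det = -1)
    (h : (M : Matrix (Fin 2) (Fin 2) ℤ) * P = P * (Umat : Matrix (Fin 2) (Fin 2) ℤ)) :
    IsConj (cls M) (cls Umat) := by
  have hu : IsUnit P := (Matrix.isUnit_iff_isUnit_det P).mpr
    (by rcases hdet with h' | h' <;> simp [h', Int.isUnit_iff])
  obtain ⟨Q, hQ⟩ := hu
  have hMQ : M * Q = Q * Umat := by
    ext : 1
    simp only [Units.val_mul]
    rw [hQ]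
    exact h
  have hconj : IsConj M Umat := by
    rw [isConj_iff]
    refine ⟨Q⁻¹, ?_⟩
    rw [inv_inv, mul_assoc, hMQ, ← mul_assoc, inv_mul_cancel, one_mul]
  rw [isConj_iff] at hconj ⊢
  obtain ⟨g, hg⟩ := hconj
  exact ⟨cls g, by rw [show cls g = QuotientGroup.mk g from rfl]; rw [show (cls M) = QuotientGroup.mk M from rfl, show (cls Umat) = QuotientGroup.mk Umat from rfl, ← QuotientGroup.mk_inv, ← QuotientGroup.mk_mul, ← QuotientGroup.mk_mul, hg]⟩

end Aux


/-- Every element of order 3 in PGL(2,ℤ) is conjugate to [U]. -/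
theorem stmt_6 (p : PGL2Z) (hp : orderOf p = 3) : IsConj p (cls Umat) := by
  induction p using QuotientGroup.induction_on with
  | H M =>
  have h3 : (QuotientGroup.mk M : PGL2Z)^3 = 1 := by
    rw [← hp]; exact pow_orderOf_eq_one _
  have hM3mem : (M^3 : GL2Z) ∈ Subgroup.center GL2Z := by
    rw [← QuotientGroup.eq_one_iff]
    rw [QuotientGroup.mk_pow]  -- maybe wrong name
    exact h3
  have hMnc : M ∉ Subgroup.center GL2Z := by
    intro hmem
    have : (QuotientGroup.mk M : PGL2Z) = 1 := (QuotientGroup.eq_one_iff M).mpr hmem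
    rw [show (QuotientGroup.mk M : PGL2Z) = 1 from this, orderOf_one] at hp
    omega
  -- entry setup
  set A := (M : Matrix (Fin 2) (Fin 2) ℤ) with hAdef
  obtain ⟨ε, hε, hA3⟩ : ∃ ε : ℤ, (ε = 1 ∨ ε = -1) ∧ A*A*A = !![ε,0;0,ε] := by
    rcases center_val' hM3mem with h | h
    · refine ⟨1, Or.inl rfl, ?_⟩
      have : ((M^3 : GL2Z) : Matrix (Fin 2) (Fin 2) ℤ) = A*A*A := by
        rw [Units.val_pow_eq_pow_val, pow_succ, pow_succ, pow_one]
      rw [this] at h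
      rw [h]; decide
    · refine ⟨-1, Or.inr rfl, ?_⟩
      have : ((M^3 : GL2Z) : Matrix (Fin 2) (Fin 2) ℤ) = A*A*A := by
        rw [Units.val_pow_eq_pow_val, pow_succ, pow_succ, pow_one]
      rw [this] at h
      rw [h]; decide
  have hAe : A = !![A 0 0, A 0 1; A 1 0, A 1 1] := Matrix.eta_fin_two A
  set a := A 0 0
  set b := A 0 1
  set c := A 1 0
  set d := A 1 1
  -- determinant is ±1
  have hu : IsUnit A.det := (Matrix.isUnit_iff_isUnit_det A).mp M.isUnit
  have hdet : a*d - b*c = 1 ∨ a*d - b*c = -1 := by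
    rw [Matrix.det_fin_two] at hu
    exact Int.isUnit_iff.mp hu
  -- det of cube is 1
  have hdet3 : (a*d - b*c)*((a*d - b*c)*(a*d - b*c)) = 1 := by
    have h1 : (A*A*A).det = A.det * (A.det * A.det) := by
      rw [Matrix.det_mul, Matrix.det_mul]; ring
    rw [hA3] at h1
    rw [Matrix.det_fin_two_of, Matrix.det_fin_two] at h1
    rcases hε with rfl | rfl <;> [skip; skip] <;> linarith [h1]
  have hδ : a*d - b*c = 1 := by
    rcases hdet with h | h
    · exact h
    · exfalso; rw [h] at hdet3; norm_num at hdet3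
  -- entry equations of the cube
  rw [hAe, Matrix.mul_fin_two, Matrix.mul_fin_two] at hA3
  have e00 := congrFun (congrFun hA3 0) 0
  have e01 := congrFun (congrFun hA3 0) 1
  have e10 := congrFun (congrFun hA3 1) 0
  have e11 := congrFun (congrFun hA3 1) 1
  simp only [Matrix.cons_val_zero, Matrix.cons_val_one, Matrix.head_cons, Matrix.head_fin_const,
    Matrix.of_apply, Matrix.cons_val', Matrix.empty_val'] at e00 e01 e10 e11
  by_cases hbc : b = 0 ∧ c = 0
  · -- diagonal case: M is central, contradiction
    exfalso
    obtain ⟨hb0, hc0⟩ := hbc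
    rw [hb0, hc0] at e00 e11 hδ
    have ha1 : a = 1 ∨ a = -1 := by
      rcases Int.isUnit_iff.mp (IsUnit.of_mul_eq_one (a := a) d (by linarith)) with h | h
      · exact Or.inl h
      · exact Or.inr h
    have hd1 : d = a := by
      rcases ha1 with h1 | h1 <;> rw [h1] at hδ ⊢ <;> linarith
    apply hMnc
    rcases ha1 with h1 | h1
    · have : M = 1 := by
        ext : 1
        rw [show ((1 : GL2Z) : Matrix (Fin 2) (Fin 2) ℤ) = 1 from rfl, ← hAdef, hAe, hb0, hc0, hd1, h1]
        exact (Matrix.one_fin_two).symm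
      rw [this]; exact Subgroup.one_mem _
    · have : M = -1 := by
        ext : 1
        rw [show ((-1 : GL2Z) : Matrix (Fin 2) (Fin 2) ℤ) = -1 by simp, ← hAdef, hAe, hb0, hc0, hd1, h1]
        decide
      rw [this]; exact neg_one_mem_center'
  · -- non-scalar case
    have hbs : b * (a*a + a*d + d*d + b*c) = 0 := by linear_combination e01
    have hcs : c * (a*a + a*d + d*d + b*c) = 0 := by linear_combination e10
    have hs : a*a + a*d + d*d + b*c = 0 := by
      rcases mul_eq_zero.mp hbs with h | h
      · rcases mul_eq_zero.mp hcs with h' | h'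
        · exact absurd ⟨h, h'⟩ hbc
        · exact h'
      · exact h
    have ht : a + d = -ε := by
      linear_combination a * hs - e00 - (a+d) * hδ
    rcases hε with rfl | rfl
    · -- ε = 1 : trace = -1, use -M
      have hd : d = -1 - a := by linarith
      have hyp : (-a)*(1-(-a)) - (-b)*(-c) = 1 := by
        rw [hd] at hδ; linear_combination hδ
      obtain ⟨P, hPdet, hPeq⟩ := reduction' (-c).natAbs (-a) (-b) (-c) le_rfl hyp
      have hval : ((-M : GL2Z) : Matrix (Fin 2) (Fin 2) ℤ) = !![-a,-b;-c,1-(-a)] := by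
        rw [Units.val_neg, ← hAdef, hAe]
        rw [show (1 : ℤ) - -a = -d by omega]
        ext i j
        fin_cases i <;> fin_cases j <;> simp
      have := isconj_cls hPdet (by rw [hval]; exact hPeq)
      rw [cls_neg] at this
      exact this
    · -- ε = -1 : trace = 1, use M
      have hd : d = 1 - a := by linarith
      have hyp : a*(1-a) - b*c = 1 := by rw [hd] at hδ; linear_combination hδ
      obtain ⟨P, hPdet, hPeq⟩ := reduction' c.natAbs a b c le_rfl hyp
      have hval : (M : Matrix (Fin 2) (Fin 2) ℤ) = !![a,b;c,1-a] := by
        rw [← hAdef, hAe, hd]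
      exact isconj_cls hPdet (by rw [hval]; exact hPeq)
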